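/- If E is a unital trace-preserving completely positive map on operators of a finite-dimensional Hilbert space and P is an orthogonal projection, then rank(E(P)) ≥ rank(P). -/

import Mathlib

open Finset Matrix ComplexOrder

/-- Complete positivity via the existence of a Kraus representation. -/
def IsCP {I J : Type*} [Fintype I] [Fintype J]
    (E : Matrix I I ℂ →ₗ[ℂ] Matrix J J ℂ) : Prop :=
  ∃ (r : ℕ) (K : Fin r → Matrix J I ℂ), ∀ X, E X = ∑ a, K a * X * (K a)ᴴ

set_option maxHeartbeats 1000000 in
lemma cp_posSemidef {I J : Type*} [Fintype I] [Fintype J] [DecidableEq J]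
    {r : ℕ} (K : Fin r → Matrix J I ℂ) {X : Matrix I I ℂ} (hX : X.PosSemidef) :
    (∑ a, K a * X * (K a)ᴴ).PosSemidef :=
  Finset.sum_induction _ Matrix.PosSemidef (fun _ _ hA hB => hA.add hB)
    Matrix.PosSemidef.zero fun a _ => hX.mul_mul_conjTranspose_same (K a)

lemma herm_trace_eq_sum {m : ℕ} {A : Matrix (Fin m) (Fin m) ℂ} (hA : A.IsHermitian) :
    A.trace = ∑ i, (hA.eigenvalues i : ℂ) := by
  conv_lhs => rw [hA.spectral_theorem]
  rw [Unitary.conjStarAlgAut_apply, Matrix.trace_mul_cycle, (Matrix.mem_unitaryGroup_iff').mp hA.eigenvectorUnitary.2,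
    Matrix.one_mul, Matrix.trace_diagonal]
  rfl

lemma norm_one_dot {m : ℕ} {A : Matrix (Fin m) (Fin m) ℂ} (hA : A.IsHermitian) (i : Fin m) :
    star (⇑(hA.eigenvectorBasis i)) ⬝ᵥ ⇑(hA.eigenvectorBasis i) = 1 := by
  have h := hA.eigenvectorBasis.orthonormal.1 i
  have h2 : (inner ℂ (hA.eigenvectorBasis i) (hA.eigenvectorBasis i) : ℂ) = 1 := by
    rw [inner_self_eq_norm_sq_to_K, h]; simp
  rwa [EuclideanSpace.inner_eq_star_dotProduct, dotProduct_comm] at h2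

/-- Eigenvalues of a hermitian idempotent are 0 or 1. -/
lemma proj_eigenvalues {m : ℕ} {P : Matrix (Fin m) (Fin m) ℂ} (hPh : P.IsHermitian)
    (hPP : P * P = P) (i : Fin m) : hPh.eigenvalues i = 0 ∨ hPh.eigenvalues i = 1 := by
  set v : Fin m → ℂ := ⇑(hPh.eigenvectorBasis i) with hv
  have h1 : P *ᵥ v = (hPh.eigenvalues i : ℂ) • v :=
    (hPh.mulVec_eigenvectorBasis i).trans (RCLike.real_smul_eq_coe_smul _ _)
  have h2 : P *ᵥ (P *ᵥ v) = P *ᵥ v := by rw [Matrix.mulVec_mulVec, hPP]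
  rw [h1, Matrix.mulVec_smul, h1, smul_smul] at h2
  have hvne : v ≠ 0 := by
    intro h
    have h0 := norm_one_dot hPh i
    rw [← hv, h] at h0
    simp at h0
  have h3 : ((hPh.eigenvalues i : ℂ) * (hPh.eigenvalues i) - hPh.eigenvalues i) • v = 0 := by
    rw [sub_smul, h2, sub_self]
  rcases smul_eq_zero.mp h3 with h | h
  · have h4 : (hPh.eigenvalues i : ℝ) * hPh.eigenvalues i - hPh.eigenvalues i = 0 := by
      exact_mod_cast h
    have hfac : hPh.eigenvalues i * (hPh.eigenvalues i - 1) = 0 := by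
      rw [mul_sub, mul_one]; exact h4
    rcases mul_eq_zero.mp hfac with h5 | h5
    · exact Or.inl h5
    · exact Or.inr (by linarith)
  · exact absurd h hvne

theorem unital_channel_rank_increases {n : ℕ}
    (E : Matrix (Fin n) (Fin n) ℂ →ₗ[ℂ] Matrix (Fin n) (Fin n) ℂ)
    (hCP : IsCP E)
    (hTP : ∀ X, (E X).trace = X.trace)
    (hU : E 1 = 1)
    (P : Matrix (Fin n) (Fin n) ℂ)
    (hPh : P.IsHermitian) (hPP : P * P = P) :
    P.rank ≤ (E P).rank := by
  obtain ⟨r, K, hK⟩ := hCP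
  -- P is positive semidefinite
  have hPsd : P.PosSemidef := by
    have h := Matrix.posSemidef_self_mul_conjTranspose P
    rwa [hPh.eq, hPP] at h
  -- 1 - P is a hermitian idempotent, hence PSD
  have h1sd : ((1 : Matrix (Fin n) (Fin n) ℂ) - P).PosSemidef := by
    have h := Matrix.posSemidef_self_mul_conjTranspose ((1 : Matrix (Fin n) (Fin n) ℂ) - P)
    have hid : ((1 : Matrix (Fin n) (Fin n) ℂ) - P) * (1 - P)ᴴ = 1 - P := by
      rw [conjTranspose_sub, conjTranspose_one, hPh.eq, Matrix.sub_mul, Matrix.mul_sub,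
        Matrix.mul_sub, hPP, Matrix.one_mul, Matrix.mul_one, Matrix.one_mul]
      abel
    rwa [hid] at h
  -- E P is PSD
  have hQsd : (E P).PosSemidef := by
    rw [hK P]; exact cp_posSemidef K hPsd
  -- 1 - E P is PSD
  have hRsd : ((1 : Matrix (Fin n) (Fin n) ℂ) - E P).PosSemidef := by
    have h : (1 : Matrix (Fin n) (Fin n) ℂ) - E P = E (1 - P) := by
      rw [map_sub, hU]
    rw [h, hK]
    exact cp_posSemidef K h1sd
  have hQ : (E P).IsHermitian := hQsd.1
  -- eigenvalues of E P are in [0,1]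
  have hnn : ∀ i, 0 ≤ hQ.eigenvalues i := hQsd.eigenvalues_nonneg
  have hle : ∀ i, hQ.eigenvalues i ≤ 1 := by
    intro i
    have h := hRsd.re_dotProduct_nonneg (⇑(hQ.eigenvectorBasis i))
    rw [Matrix.sub_mulVec, dotProduct_sub, map_sub, Matrix.one_mulVec,
      norm_one_dot hQ i, ← hQ.eigenvalues_eq i] at h
    simp only [RCLike.one_re] at h
    linarith
  -- trace equalities via real parts
  have htr : ∑ i, hPh.eigenvalues i = ∑ i, hQ.eigenvalues i := by
    have h : (∑ i, (hPh.eigenvalues i : ℂ)) = ∑ i, (hQ.eigenvalues i : ℂ) := by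
      rw [← herm_trace_eq_sum hPh, ← herm_trace_eq_sum hQ, hTP P]
    exact_mod_cast h
  -- rank of P equals sum of eigenvalues of P
  have hrankP : (P.rank : ℝ) = ∑ i, hPh.eigenvalues i := by
    rw [hPh.rank_eq_card_non_zero_eigs, Fintype.card_subtype,
      ← Finset.sum_filter_ne_zero Finset.univ (f := hPh.eigenvalues)]
    have hone : ∀ i ∈ Finset.univ.filter (fun i => hPh.eigenvalues i ≠ 0),
        hPh.eigenvalues i = 1 := fun i hi =>
      (proj_eigenvalues hPh hPP i).resolve_left (Finset.mem_filter.mp hi).2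
    rw [Finset.sum_congr rfl hone, Finset.sum_const, nsmul_eq_mul, mul_one]
  -- sum of eigenvalues of E P bounded by rank
  have hrankQ : ∑ i, hQ.eigenvalues i ≤ ((E P).rank : ℝ) := by
    rw [hQ.rank_eq_card_non_zero_eigs, Fintype.card_subtype,
      ← Finset.sum_filter_ne_zero Finset.univ (f := hQ.eigenvalues)]
    calc ∑ i ∈ Finset.univ.filter (fun i => hQ.eigenvalues i ≠ 0), hQ.eigenvalues i
        ≤ ∑ _i ∈ Finset.univ.filter (fun i => hQ.eigenvalues i ≠ 0), (1 : ℝ) :=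
          Finset.sum_le_sum fun i _ => hle i
      _ = _ := by simp
  have : (P.rank : ℝ) ≤ ((E P).rank : ℝ) := by
    rw [hrankP, htr]; exact hrankQ
  exact_mod_cast this
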